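/- Let G = (V,E) be a locally finite, connected graph and Γ a subgroup of the automorphism group of G acting transitively on V. Fix a vertex x and for q > 0 let t_q = #{y : y ~ x and Δ(x,y) = q}. Then for every q > 0: t_{q^{-1}} = q·t_q; in particular, t_q > 0 if and only if t_{q^{-1}} > 0, so the set of values of Δ on pairs of neighbors is closed under taking inverses. -/

import Mathlib

open SimpleGraph

attribute [local instance] Classical.propDecidable

/-- The modular function `Δ(x,y) = |Γ_y x| / |Γ_x y|` of a group `Γ` acting on `V`. -/
noncomputable def modular {V : Type*} (Γ : Type*) [Group Γ] [MulAction Γ V] (x y : V) : ℝ :=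
  ((MulAction.orbit (MulAction.stabilizer Γ y) x).ncard : ℝ) /
    ((MulAction.orbit (MulAction.stabilizer Γ x) y).ncard : ℝ)

section Aux

open MulAction Pointwise

variable {V : Type*} {Γ : Type*} [Group Γ] [MulAction Γ V]

lemma mem_orbit_stab_iff (u v w : V) :
    w ∈ orbit (stabilizer Γ u) v ↔ ∃ h : Γ, h • u = u ∧ h • v = w := by
  constructor
  · rintro ⟨⟨h, hh⟩, rfl⟩
    exact ⟨h, hh, rfl⟩
  · rintro ⟨h, h1, h2⟩
    exact ⟨⟨h, h1⟩, h2⟩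

lemma orbit_stab_smul (g : Γ) (u v : V) :
    orbit (stabilizer Γ (g • u)) (g • v) = g • orbit (stabilizer Γ u) v := by
  ext w
  rw [mem_orbit_stab_iff]
  constructor
  · rintro ⟨h, h1, rfl⟩
    refine ⟨(g⁻¹ * h * g) • v, (mem_orbit_stab_iff _ _ _).2 ⟨g⁻¹ * h * g, ?_, rfl⟩, ?_⟩
    · have := congrArg (fun w => g⁻¹ • w) h1
      simpa [mul_smul] using this
    · simp [mul_smul]
  · rintro ⟨w', hw', rfl⟩
    rw [mem_orbit_stab_iff] at hw'
    obtain ⟨h, h1, rfl⟩ := hw'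
    exact ⟨g * h * g⁻¹, by simp [mul_smul, h1], by simp [mul_smul]⟩

lemma ncard_orbit_stab_smul (g : Γ) (u v : V) :
    (orbit (stabilizer Γ (g • u)) (g • v)).ncard = (orbit (stabilizer Γ u) v).ncard := by
  rw [orbit_stab_smul, Set.ncard_smul_set]

lemma modular_smul (g : Γ) (u v : V) : modular Γ (g • u) (g • v) = modular Γ u v := by
  unfold modular
  rw [ncard_orbit_stab_smul, ncard_orbit_stab_smul]

lemma modular_symm (u v : V) : modular Γ v u = (modular Γ u v)⁻¹ := by
  unfold modular
  rw [inv_div]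

lemma modular_facts {x y : V} {q : ℝ} (hq : 0 < q) (h : modular Γ x y = q) :
    0 < (orbit (stabilizer Γ x) y).ncard ∧
      ((orbit (stabilizer Γ y) x).ncard : ℝ) = q * ((orbit (stabilizer Γ x) y).ncard : ℝ) := by
  unfold modular at h
  have hb : ((orbit (stabilizer Γ x) y).ncard : ℝ) ≠ 0 := by
    intro h0
    rw [h0, div_zero] at h
    exact hq.ne h
  have hbpos : (orbit (stabilizer Γ x) y).ncard ≠ 0 := by
    intro h0
    exact hb (by rw [h0]; norm_num)
  refine ⟨Nat.pos_of_ne_zero hbpos, ?_⟩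
  rw [div_eq_iff hb] at h
  rw [h]

/-- The key fiber description: for `y ~ x` and `g • y = x`, the set of `z ~ x` with
`Δ(x,z) = Δ(y,x)` reachable as `z = γ • x` with `γ • y = x` is exactly the
`Γ_x`-orbit of `g • x`. -/
lemma key {V : Type*} [DecidableEq V] (G : SimpleGraph V) [G.LocallyFinite]
    {Γ : Type*} [Group Γ] [MulAction Γ V]
    (hauto : ∀ (γ : Γ) (u v : V), G.Adj (γ • u) (γ • v) ↔ G.Adj u v)
    (x y : V) (hadj : G.Adj x y) (g : Γ) (hg : g • y = x) (s : ℝ)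
    (hs : modular Γ y x = s) :
    (((G.neighborFinset x).filter
        (fun z => modular Γ x z = s ∧ ∃ γ : Γ, γ • y = x ∧ γ • x = z)) : Set V)
      = orbit (stabilizer Γ x) (g • x) := by
  ext z
  simp only [Finset.coe_filter, Set.mem_setOf_eq, mem_neighborFinset, mem_orbit_stab_iff]
  constructor
  · rintro ⟨hadjz, hmz, γ, h1, rfl⟩
    refine ⟨γ * g⁻¹, ?_, by simp [mul_smul]⟩
    have hy : g⁻¹ • x = y := by rw [← hg]; simp
    simp [mul_smul, hy, h1]
  · rintro ⟨h, h1, rfl⟩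
    have hy : (h * g) • y = x := by rw [mul_smul, hg, h1]
    refine ⟨?_, ?_, h * g, hy, by rw [mul_smul]⟩
    · have : G.Adj ((h * g) • y) ((h * g) • x) := (hauto _ _ _).2 hadj.symm
      rw [hy, mul_smul] at this
      exact this
    · have : modular Γ ((h * g) • y) ((h * g) • x) = modular Γ y x := modular_smul _ _ _
      rw [hy, mul_smul] at this
      rw [this, hs]

lemma key_card {V : Type*} [DecidableEq V] (G : SimpleGraph V) [G.LocallyFinite]
    {Γ : Type*} [Group Γ] [MulAction Γ V]
    (hauto : ∀ (γ : Γ) (u v : V), G.Adj (γ • u) (γ • v) ↔ G.Adj u v)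
    (x y : V) (hadj : G.Adj x y) (g : Γ) (hg : g • y = x) (s : ℝ)
    (hs : modular Γ y x = s) :
    ((G.neighborFinset x).filter
        (fun z => modular Γ x z = s ∧ ∃ γ : Γ, γ • y = x ∧ γ • x = z)).card
      = (orbit (stabilizer Γ y) x).ncard := by
  rw [← Set.ncard_coe_finset, key G hauto x y hadj g hg s hs]
  have h2 := ncard_orbit_stab_smul (Γ := Γ) (V := V) g y x
  rw [hg] at h2
  exact h2

end Aux

/-- For a locally finite, connected graph `G` with a group `Γ` acting on it by
automorphisms, transitively, fix a vertex `x` and for `q > 0` let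
`t_q = #{y ~ x : Δ(x,y) = q}`. Then `t_{q⁻¹} = q·t_q`, and in particular
`t_q > 0 ↔ t_{q⁻¹} > 0`. -/
theorem stmt6 {V : Type*} [DecidableEq V] (G : SimpleGraph V) [G.LocallyFinite]
    (hconn : G.Connected)
    (Γ : Type*) [Group Γ] [MulAction Γ V]
    (hauto : ∀ (γ : Γ) (u v : V), G.Adj (γ • u) (γ • v) ↔ G.Adj u v)
    (htrans : ∀ x y : V, ∃ γ : Γ, γ • x = y)
    (x : V) (q : ℝ) (hq : 0 < q) :
    ((((G.neighborFinset x).filter (fun y => modular Γ x y = q⁻¹)).card : ℝ) =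
        q * (((G.neighborFinset x).filter (fun y => modular Γ x y = q)).card : ℝ)) ∧
    (0 < ((G.neighborFinset x).filter (fun y => modular Γ x y = q)).card ↔
        0 < ((G.neighborFinset x).filter (fun y => modular Γ x y = q⁻¹)).card) := by
  classical
  open MulAction in
  set Sq := (G.neighborFinset x).filter (fun y => modular Γ x y = q) with hSq
  set Sq' := (G.neighborFinset x).filter (fun y => modular Γ x y = q⁻¹) with hSq'
  -- the double sum
  have main : ((Sq.card : ℝ)) = q⁻¹ * (Sq'.card : ℝ) := by
    have e1 : ∑ y ∈ Sq, ∑ z ∈ Sq',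
        (if ∃ γ : Γ, γ • y = x ∧ γ • x = z
          then ((MulAction.orbit (MulAction.stabilizer Γ x) z).ncard : ℝ)⁻¹ else 0)
        = (Sq.card : ℝ) := by
      have : ∑ y ∈ Sq, (1:ℝ) = (Sq.card : ℝ) := by
        rw [Finset.sum_const, nsmul_eq_mul, mul_one]
      rw [← this]
      apply Finset.sum_congr rfl
      intro y hy
      rw [hSq, Finset.mem_filter, mem_neighborFinset] at hy
      obtain ⟨hadj, hmy⟩ := hy
      obtain ⟨g, hg⟩ := htrans y x
      have hs : modular Γ y x = q⁻¹ := by rw [modular_symm, hmy]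
      have hfilter : Sq'.filter (fun z => ∃ γ : Γ, γ • y = x ∧ γ • x = z)
          = (G.neighborFinset x).filter
              (fun z => modular Γ x z = q⁻¹ ∧ ∃ γ : Γ, γ • y = x ∧ γ • x = z) := by
        rw [hSq', Finset.filter_filter]
      have hcoe := key G hauto x y hadj g hg q⁻¹ hs
      have hcard := key_card G hauto x y hadj g hg q⁻¹ hs
      have hA := modular_facts hq hmy
      set A : ℕ := (MulAction.orbit (MulAction.stabilizer Γ y) x).ncard with hAdef
      have hApos : 0 < (A : ℝ) := by
        rw [hA.2]
        have := hA.1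
        positivity
      rw [← Finset.sum_filter, hfilter]
      have hconst : ∀ z ∈ (G.neighborFinset x).filter
          (fun z => modular Γ x z = q⁻¹ ∧ ∃ γ : Γ, γ • y = x ∧ γ • x = z),
          ((MulAction.orbit (MulAction.stabilizer Γ x) z).ncard : ℝ)⁻¹ = (A : ℝ)⁻¹ := by
        intro z hz
        have hzo : z ∈ MulAction.orbit (MulAction.stabilizer Γ x) (g • x) := by
          rw [← hcoe]; exact_mod_cast hz
        have horb : MulAction.orbit (MulAction.stabilizer Γ x) z
            = MulAction.orbit (MulAction.stabilizer Γ x) (g • x) :=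
          MulAction.orbit_eq_iff.2 hzo
        have h2 := ncard_orbit_stab_smul (Γ := Γ) (V := V) g y x
        rw [hg] at h2
        rw [horb, h2]
      rw [Finset.sum_congr rfl hconst, Finset.sum_const, nsmul_eq_mul, hcard]
      exact mul_inv_cancel₀ hApos.ne'
    have e2 : ∑ y ∈ Sq, ∑ z ∈ Sq',
        (if ∃ γ : Γ, γ • y = x ∧ γ • x = z
          then ((MulAction.orbit (MulAction.stabilizer Γ x) z).ncard : ℝ)⁻¹ else 0)
        = q⁻¹ * (Sq'.card : ℝ) := by
      rw [Finset.sum_comm]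
      have hconstsum : ∑ z ∈ Sq', q⁻¹ = q⁻¹ * (Sq'.card : ℝ) := by
        rw [Finset.sum_const, nsmul_eq_mul, mul_comm]
      rw [← hconstsum]
      apply Finset.sum_congr rfl
      intro z hz
      rw [hSq', Finset.mem_filter, mem_neighborFinset] at hz
      obtain ⟨hadj, hmz⟩ := hz
      obtain ⟨g, hg⟩ := htrans z x
      have hs : modular Γ z x = q := by rw [modular_symm, hmz, inv_inv]
      have hiff : ∀ y ∈ Sq, ((∃ γ : Γ, γ • y = x ∧ γ • x = z)
          ↔ (∃ γ : Γ, γ • z = x ∧ γ • x = y)) := by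
        intro y _
        constructor
        · rintro ⟨γ, h1, h2⟩
          exact ⟨γ⁻¹, by rw [← h2]; simp, by rw [← h1]; simp⟩
        · rintro ⟨γ, h1, h2⟩
          exact ⟨γ⁻¹, by rw [← h2]; simp, by rw [← h1]; simp⟩
      have hfilter : Sq.filter (fun y => ∃ γ : Γ, γ • y = x ∧ γ • x = z)
          = (G.neighborFinset x).filter
              (fun y => modular Γ x y = q ∧ ∃ γ : Γ, γ • z = x ∧ γ • x = y) := by
        rw [Finset.filter_congr hiff, hSq, Finset.filter_filter]
      have hcard := key_card G hauto x z hadj g hg q hs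
      rw [← Finset.sum_filter, hfilter, Finset.sum_const, nsmul_eq_mul, hcard]
      have hmz' := hmz
      unfold modular at hmz'
      rw [div_eq_mul_inv] at hmz'
      exact hmz'
    
    rw [← e1, e2]
  have goal1 : ((Sq'.card : ℝ)) = q * (Sq.card : ℝ) := by
    rw [main, ← mul_assoc, mul_inv_cancel₀ hq.ne', one_mul]
  refine ⟨goal1, ?_, ?_⟩
  · intro h
    have hpos : (0:ℝ) < q * (Sq.card : ℝ) := by
      have : (0:ℝ) < (Sq.card : ℝ) := by exact_mod_cast h
      exact mul_pos hq this
    rw [← goal1] at hpos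
    exact_mod_cast hpos
  · intro h
    by_contra hc
    push_neg at hc
    have h0 : Sq.card = 0 := Nat.le_zero.1 hc
    rw [h0] at goal1
    simp only [Nat.cast_zero, mul_zero, Nat.cast_eq_zero] at goal1
    omega
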